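/- In the NP-hardness reduction from weighted set cover, if K̄ is any feasible feedback matrix (every state lies in an SCC with a feedback edge in the closed-loop digraph), then the collection S(K̄) = {S_{j−N} : K̄_{(r+1)j} = ⋆} of sets whose outputs are fed to input u_{r+1} covers the universe U = {1,…,N}. -/
import Mathlib


/-- Mutual reachability under the relation `R`. -/
def mreach {V : Type*} (R : V → V → Prop) (a b : V) : Prop :=
  Relation.ReflTransGen R a b ∧ Relation.ReflTransGen R b a

/-- The states of the structured system built from a weighted set cover
instance with universe `Fin N` and sets `S_1, …, S_r`: the `N` element nodes,
the `r` set nodes, and the hub node `x_{N+r+1}`. -/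
abbrev RedState (N r : ℕ) := Fin N ⊕ Fin r ⊕ Unit

/-- Vertices of the closed-loop digraph of the reduction: states, the `r+1`
dedicated inputs and the `r` dedicated outputs. -/
abbrev RedV (N r : ℕ) := RedState N r ⊕ Fin (r + 1) ⊕ Fin r

/-- Edge relation of the closed-loop digraph of the NP-hardness reduction
from weighted set cover: every state has a self-loop; the hub feeds every
element node; element node `j` feeds set node `k` iff `j ∈ S k`; input `u_k`
(`k < r`) actuates set node `k` and input `u_{r+1}` actuates the hub; output
`y_k` senses set node `k`; and the feedback edges are given by `K` (pairs
`(output, input)`). -/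
def redEdge {N r : ℕ} (S : Fin r → Finset (Fin N))
    (K : Finset (Fin r × Fin (r + 1))) (v w : RedV N r) : Prop :=
  (∃ x : RedState N r, v = Sum.inl x ∧ w = Sum.inl x) ∨
  (∃ j : Fin N, v = Sum.inl (Sum.inr (Sum.inr ())) ∧ w = Sum.inl (Sum.inl j)) ∨
  (∃ (j : Fin N) (k : Fin r), j ∈ S k ∧
    v = Sum.inl (Sum.inl j) ∧ w = Sum.inl (Sum.inr (Sum.inl k))) ∨
  (∃ k : Fin r, v = Sum.inr (Sum.inl k.castSucc) ∧
    w = Sum.inl (Sum.inr (Sum.inl k))) ∨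
  (v = Sum.inr (Sum.inl (Fin.last r)) ∧ w = Sum.inl (Sum.inr (Sum.inr ()))) ∨
  (∃ k : Fin r, v = Sum.inl (Sum.inr (Sum.inl k)) ∧ w = Sum.inr (Sum.inr k)) ∨
  (∃ e ∈ K, v = Sum.inr (Sum.inr e.1) ∧ w = Sum.inr (Sum.inl e.2))

/-- Feasibility of a feedback matrix `K` in the reduction: every state lies
in an SCC of the closed-loop digraph containing both endpoints of some
feedback edge of `K`. -/
def redFeasible {N r : ℕ} (S : Fin r → Finset (Fin N))
    (K : Finset (Fin r × Fin (r + 1))) : Prop :=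
  ∀ x : RedState N r, ∃ e ∈ K,
    mreach (redEdge S K) (Sum.inl x) (Sum.inr (Sum.inr e.1)) ∧
    mreach (redEdge S K) (Sum.inl x) (Sum.inr (Sum.inl e.2))

/-- In the NP-hardness reduction from weighted set cover, if
`K̄` is any feasible feedback matrix (every state lies in an SCC with a
feedback edge in the closed-loop digraph), where the feasible feedback edges
are `(y_j, u_j)` and `(y_j, u_{r+1})`, then the collection
`S(K̄) = {S_j : K̄_{(r+1)j} = ⋆}` of sets whose outputs are fed to input
`u_{r+1}` covers the universe `{1, …, N}`. -/
theorem stmt_17 {N r : ℕ} (S : Fin r → Finset (Fin N))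
    (K : Finset (Fin r × Fin (r + 1)))
    (hKfeasEdges : ∀ e ∈ K, e.2 = Fin.castSucc e.1 ∨ e.2 = Fin.last r)
    (hK : redFeasible S K) :
    ∀ j : Fin N, ∃ k : Fin r, (k, Fin.last r) ∈ K ∧ j ∈ S k := by
  intro j
  obtain ⟨e, heK, hy, hu⟩ := hK (Sum.inl j)
  -- invariant Q : reachable vertices before the goal holds
  set Good : Prop := ∃ k : Fin r, (k, Fin.last r) ∈ K ∧ j ∈ S k with hGood
  set Q : RedV N r → Prop := fun v => Good ∨ ∃ k : Fin r, j ∈ S k ∧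
      (v = Sum.inl (Sum.inr (Sum.inl k)) ∨ v = Sum.inr (Sum.inr k) ∨
        v = Sum.inr (Sum.inl k.castSucc)) with hQ
  have Qclosed : ∀ v w : RedV N r, redEdge S K v w → Q v → Q w := by
    intro v w hvw hQv
    rcases hQv with hg | ⟨k, hjk, hv | hv | hv⟩
    · exact Or.inl hg
    all_goals subst hv
    · -- v = set node k : self-loop or output edge
      rcases hvw with ⟨x, hx1, hx2⟩ | ⟨j', h1, _⟩ | ⟨j', k', _, h1, _⟩ |
        ⟨k', h1, _⟩ | ⟨h1, _⟩ | ⟨k', h1, h2⟩ | ⟨e', _, h1, _⟩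
      · rw [← hx1] at hx2; exact Or.inr ⟨k, hjk, Or.inl hx2⟩
      · simp at h1
      · simp at h1
      · simp at h1
      · simp at h1
      · simp only [Sum.inl.injEq, Sum.inr.injEq, Sum.inl.injEq] at h1
        subst h1; exact Or.inr ⟨k, hjk, Or.inr (Or.inl h2)⟩
      · simp at h1
    · -- v = output y_k : feedback edges
      rcases hvw with ⟨x, hx1, _⟩ | ⟨j', h1, _⟩ | ⟨j', k', _, h1, _⟩ |
        ⟨k', h1, _⟩ | ⟨h1, _⟩ | ⟨k', h1, _⟩ | ⟨e', he'K, h1, h2⟩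
      · simp at hx1
      · simp at h1
      · simp at h1
      · simp at h1
      · simp at h1
      · simp at h1
      · simp only [Sum.inr.injEq] at h1
        subst h1
        rcases hKfeasEdges e' he'K with h | h
        · rw [h2, h]; exact Or.inr ⟨e'.1, hjk, Or.inr (Or.inr rfl)⟩
        · exact Or.inl ⟨e'.1, by rw [← h]; simpa using he'K, hjk⟩
    · -- v = input u_{castSucc k} : actuates set node k
      rcases hvw with ⟨x, hx1, _⟩ | ⟨j', h1, _⟩ | ⟨j', k', _, h1, _⟩ |
        ⟨k', h1, h2⟩ | ⟨h1, _⟩ | ⟨k', h1, _⟩ | ⟨e', _, h1, _⟩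
      · simp at hx1
      · simp at h1
      · simp at h1
      · simp only [Sum.inr.injEq, Sum.inl.injEq] at h1
        have : k' = k := Fin.castSucc_injective r h1.symm
        subst this; subst h2
        exact Or.inr ⟨_, hjk, Or.inl rfl⟩
      · exfalso
        simp only [Sum.inr.injEq, Sum.inl.injEq] at h1
        exact absurd h1 (Fin.castSucc_lt_last k).ne
      · simp at h1
      · simp at h1
  -- P : invariant for paths starting at the element node x_j
  have Pclosed : ∀ v w : RedV N r, redEdge S K v w →
      (v = Sum.inl (Sum.inl j) ∨ Q v) → (w = Sum.inl (Sum.inl j) ∨ Q w) := by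
    intro v w hvw hPv
    rcases hPv with hv | hQv
    · subst hv
      rcases hvw with ⟨x, hx1, hx2⟩ | ⟨j', h1, _⟩ | ⟨j', k', hmem, h1, h2⟩ |
        ⟨k', h1, _⟩ | ⟨h1, _⟩ | ⟨k', h1, _⟩ | ⟨e', _, h1, _⟩
      · rw [← hx1] at hx2; exact Or.inl hx2
      · simp at h1
      · simp only [Sum.inl.injEq] at h1
        subst h2
        exact Or.inr (Or.inr ⟨k', h1 ▸ hmem, Or.inl rfl⟩)
      · simp at h1
      · simp at h1
      · simp at h1
      · simp at h1
    · exact Or.inr (Qclosed v w hvw hQv)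
  -- the forward path from x_j to u_{e.2}
  have propP : ∀ {a b : RedV N r}, Relation.ReflTransGen (redEdge S K) a b →
      (a = Sum.inl (Sum.inl j) ∨ Q a) → (b = Sum.inl (Sum.inl j) ∨ Q b) := by
    intro a b h ha
    induction h with
    | refl => exact ha
    | tail _ h2 ih => exact Pclosed _ _ h2 ih
  have propQ : ∀ {a b : RedV N r}, Relation.ReflTransGen (redEdge S K) a b →
      Q a → Q b := by
    intro a b h ha
    induction h with
    | refl => exact ha
    | tail _ h2 ih => exact Qclosed _ _ h2 ih
  have hfwd := propP hu.1 (Or.inl rfl)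
  rcases hfwd with h | hQu
  · exact absurd h (by simp)
  rcases hQu with hg | ⟨k, hjk, hv | hv | hv⟩
  · exact hg
  · exact absurd hv (by simp)
  · exact absurd hv (by simp)
  · -- e.2 = castSucc k; use the return path from u_{e.2} to x_j
    have hret := propQ hu.2 (Or.inr ⟨k, hjk, Or.inr (Or.inr (by rw [← hv]))⟩)
    rcases hret with hg | ⟨k', _, hv' | hv' | hv'⟩
    · exact hg
    all_goals exact absurd hv' (by simp)
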